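/- Let N and d be positive natural numbers and let G be a simple graph on the vertex set Fin N in which every vertex has degree at most d. Then the edge set of G can be partitioned into d classes such that each class, viewed as a subgraph of G on the same vertex set, is a forest (contains no cycle). Equivalently, there is an edge coloring of G with d colors in which every color class is acyclic. -/

import Mathlib

open SimpleGraph

/-- A graph in which every vertex has at most one smaller neighbor is acyclic. -/
lemma acyclic_of_at_most_one_down {V : Type*} [LinearOrder V] (H : SimpleGraph V)
    (hH : ∀ v a b, H.Adj v a → H.Adj v b → a < v → b < v → a = b) : H.IsAcyclic := by
  intro v p hp
  obtain ⟨m, hm⟩ : ∃ m, p.support.maximum = some m := by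
    cases hmax : p.support.maximum with
    | bot => exact absurd (List.maximum_eq_bot.mp hmax) p.support_ne_nil
    | coe m => exact ⟨m, rfl⟩
  have hmm : m ∈ p.support := List.maximum_mem hm
  have hle : ∀ x ∈ p.support, x ≤ m := fun x hx => List.le_maximum_of_mem hx hm
  obtain ⟨q, hq, hsub⟩ : ∃ q : H.Walk m m, q.IsCycle ∧ ∀ x ∈ q.support, x ≤ m := by
    refine ⟨p.rotate m hmm, hp.rotate hmm, ?_⟩
    intro x hx
    rw [(p.rotate m hmm).support_eq_cons] at hx
    rcases List.mem_cons.mp hx with h | h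
    · exact h ▸ le_refl m
    · exact hle x (List.mem_of_mem_tail
        (((SimpleGraph.Walk.support_rotate p m hmm).mem_iff).mp h))
  cases q with
  | nil => exact hq.ne_nil rfl
  | @cons _ a _ h1 q' =>
    -- h1 : H.Adj m a, q' : H.Walk a m
    have ha_lt : a < m := by
      have : a ≤ m := hsub a (by simp [SimpleGraph.Walk.support_cons,
        q'.start_mem_support])
      exact lt_of_le_of_ne this h1.ne'
    rcases hr : q'.reverse with _ | @⟨_, b, _, h2, r⟩
    · -- q'.reverse = nil forces m = a
      exact h1.ne (by simpa using congrArg SimpleGraph.Walk.length hr ▸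
        (by simpa [SimpleGraph.Walk.length_reverse] using congrArg SimpleGraph.Walk.length hr))
    ·       -- h2 : H.Adj m b, r : H.Walk b a
      have hb_mem : b ∈ q'.support := by
        have : b ∈ q'.reverse.support := by
          rw [hr, SimpleGraph.Walk.support_cons]
          exact List.mem_cons_of_mem _ r.start_mem_support
        rwa [SimpleGraph.Walk.support_reverse, List.mem_reverse] at this
      have hb_lt : b < m := by
        have : b ≤ m := hsub b (by
          rw [SimpleGraph.Walk.support_cons]; exact List.mem_cons_of_mem _ hb_mem)
        exact lt_of_le_of_ne this h2.ne'
      have hab : a = b := hH m a b h1 h2 ha_lt hb_lt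
      -- contradiction via nodup edges
      have hedges : s(m, b) ∈ q'.edges := by
        have : s(m, b) ∈ q'.reverse.edges := by
          rw [hr, SimpleGraph.Walk.edges_cons]; exact List.mem_cons_self
        rwa [SimpleGraph.Walk.edges_reverse, List.mem_reverse] at this
      have hnodup := hq.isTrail.edges_nodup
      rw [SimpleGraph.Walk.edges_cons, List.nodup_cons] at hnodup
      exact hnodup.1 (hab ▸ hedges)

theorem forest_decomposition (N d : ℕ) (hN : 0 < N) (hd : 0 < d)
    (G : SimpleGraph (Fin N)) (hdeg : ∀ v : Fin N, (G.neighborSet v).ncard ≤ d) :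
    ∃ c : Sym2 (Fin N) → Fin d,
      ∀ i : Fin d,
        (SimpleGraph.fromRel (fun x y => G.Adj x y ∧ c s(x, y) = i)).IsAcyclic := by
  classical
  set S : Fin N → Finset (Fin N) :=
    fun v => Finset.univ.filter (fun u => G.Adj v u ∧ u < v) with hSdef
  have hcard : ∀ v, (S v).card ≤ d := by
    intro v
    have h1 : S v ⊆ G.neighborFinset v := by
      intro u hu
      simp only [hSdef, Finset.mem_filter] at hu
      rw [SimpleGraph.mem_neighborFinset]
      exact hu.2.1
    calc (S v).card ≤ (G.neighborFinset v).card := Finset.card_le_card h1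
      _ = (G.neighborSet v).ncard := by
          rw [SimpleGraph.neighborFinset, Set.ncard_eq_toFinset_card']
      _ ≤ d := hdeg v
  set g : Fin N → Fin N → Fin d := fun v u =>
    if h : u ∈ S v then Fin.castLE (hcard v) ((S v).equivFin ⟨u, h⟩) else ⟨0, hd⟩
    with hgdef
  have hginj : ∀ v, ∀ a ∈ S v, ∀ b ∈ S v, g v a = g v b → a = b := by
    intro v a ha b hb hgab
    simp only [hgdef, dif_pos ha, dif_pos hb] at hgab
    have := (Fin.castLE_injective (hcard v)) hgab
    have := (S v).equivFin.injective this
    exact Subtype.ext_iff.mp this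
  have hsymm : ∀ x y : Fin N, g (max x y) (min x y) = g (max y x) (min y x) :=
    fun x y => by rw [max_comm, min_comm]
  set c : Sym2 (Fin N) → Fin d := Sym2.lift ⟨fun x y => g (max x y) (min x y), hsymm⟩
    with hcdef
  refine ⟨c, ?_⟩
  intro i
  apply acyclic_of_at_most_one_down
  intro v a b hva hvb halt hblt
  have key : ∀ x, x < v →
      (SimpleGraph.fromRel (fun x y => G.Adj x y ∧ c s(x, y) = i)).Adj v x → g v x = i := by
    intro x hxv hadj
    rw [SimpleGraph.fromRel_adj] at hadj
    have hGadj : g (max v x) (min v x) = i := by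
      rcases hadj.2 with ⟨h, hc⟩ | ⟨h, hc⟩
      · simpa [hcdef] using hc
      · have := hc
        simp only [hcdef, Sym2.lift_mk] at this
        rw [max_comm, min_comm] at this
        exact this
    rwa [max_eq_left hxv.le, min_eq_right hxv.le] at hGadj
  have ha : g v a = i := key a halt hva
  have hb : g v b = i := key b hblt hvb
  have haS : a ∈ S v := by
    simp only [hSdef, Finset.mem_filter, Finset.mem_univ, true_and]
    rw [SimpleGraph.fromRel_adj] at hva
    rcases hva.2 with ⟨h, _⟩ | ⟨h, _⟩
    · exact ⟨h, halt⟩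
    · exact ⟨h.symm, halt⟩
  have hbS : b ∈ S v := by
    simp only [hSdef, Finset.mem_filter, Finset.mem_univ, true_and]
    rw [SimpleGraph.fromRel_adj] at hvb
    rcases hvb.2 with ⟨h, _⟩ | ⟨h, _⟩
    · exact ⟨h, hblt⟩
    · exact ⟨h.symm, hblt⟩
  exact hginj v a haS b hbS (ha.trans hb.symm)
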